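/- Let X ⊆ ℝⁿ be a nonempty closed convex set, let W : ℝⁿ → ℝ be convex and continuously differentiable with L-Lipschitz gradient on X (L > 0). For y ∈ X and s > 0 define p(y) = P_X[y − s∇W(y)], the projection of the gradient step onto X. Then for every θ ∈ [0,1], choosing s = 2/(Lθ + 2), the point ŷ = y + θ(p(y) − y) lies in X and satisfies W(ŷ) − W(y) ≤ −θ‖p(y) − y‖². -/

import Mathlib

open Set

theorem descent_aux {n : ℕ} (X : Set (EuclideanSpace ℝ (Fin n))) (hXconv : Convex ℝ X)
    (W : EuclideanSpace ℝ (Fin n) → ℝ)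
    (g : EuclideanSpace ℝ (Fin n) → EuclideanSpace ℝ (Fin n))
    (hgrad : ∀ x, HasGradientAt W (g x) x)
    (L : ℝ) (hL : 0 < L)
    (hLip : ∀ y ∈ X, ∀ y' ∈ X, ‖g y - g y'‖ ≤ L * ‖y - y'‖)
    (y d : EuclideanSpace ℝ (Fin n)) (hy : y ∈ X) (hyd : y + d ∈ X) :
    W (y + d) - W y ≤ inner ℝ (g y) d + L / 2 * ‖d‖ ^ 2 := by
  have hseg : ∀ t ∈ Icc (0:ℝ) 1, y + t • d ∈ X := by
    intro t ht
    have := hXconv hy hyd (by linarith [ht.2]) ht.1 (by ring : (1 - t) + t = 1)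
    convert this using 1
    module
  set h : ℝ → ℝ := fun t => W (y + t • d) with hh
  have hderiv : ∀ t : ℝ, HasDerivAt h (inner ℝ (g (y + t • d)) d : ℝ) t := by
    intro t
    have h1 : HasDerivAt (fun t : ℝ => y + t • d) d t := by
      simpa using ((hasDerivAt_id t).smul_const d).const_add y
    have h2 := (hgrad (y + t • d)).hasFDerivAt
    have := h2.comp_hasDerivAt t h1
    exact this
  set ψ : ℝ → ℝ := fun t => h t - h 0 - t * inner ℝ (g y) d - L / 2 * t ^ 2 * ‖d‖ ^ 2 with hψ
  have hψderiv : ∀ t : ℝ, HasDerivAt ψ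
      ((inner ℝ (g (y + t • d)) d : ℝ) - inner ℝ (g y) d - L * t * ‖d‖ ^ 2) t := by
    intro t
    have h1 : HasDerivAt (fun t : ℝ => t * (inner ℝ (g y) d : ℝ)) (inner ℝ (g y) d) t := by
      simpa using (hasDerivAt_id t).mul_const (inner ℝ (g y) d : ℝ)
    have h2 : HasDerivAt (fun t : ℝ => L / 2 * t ^ 2 * ‖d‖ ^ 2) (L * t * ‖d‖ ^ 2) t := by
      have := ((hasDerivAt_pow 2 t).const_mul (L / 2)).mul_const (‖d‖ ^ 2)
      exact this.congr_deriv (by rw [show (2:ℕ) - 1 = 1 from rfl, pow_one]; push_cast; ring)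
    exact (((hderiv t).sub_const (h 0)).sub h1).sub h2
  have hψanti : AntitoneOn ψ (Icc (0:ℝ) 1) := by
    apply antitoneOn_of_deriv_nonpos (convex_Icc 0 1)
    · exact fun t _ => (hψderiv t).differentiableAt.continuousAt.continuousWithinAt
    · intro t ht
      exact (hψderiv t).differentiableAt.differentiableWithinAt
    · intro t ht
      rw [interior_Icc] at ht
      rw [(hψderiv t).deriv]
      have hx : y + t • d ∈ X := hseg t ⟨le_of_lt ht.1, le_of_lt ht.2⟩
      have hcs : (inner ℝ (g (y + t • d)) d : ℝ) - inner ℝ (g y) d ≤ ‖g (y + t • d) - g y‖ * ‖d‖ := by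
        rw [← inner_sub_left]
        exact real_inner_le_norm _ _
      have hlip : ‖g (y + t • d) - g y‖ ≤ L * (t * ‖d‖) := by
        have := hLip _ hx _ hy
        simpa [norm_smul, abs_of_pos ht.1] using this
      nlinarith [norm_nonneg d, ht.1.le, mul_le_mul_of_nonneg_right hlip (norm_nonneg d)]
  have key := hψanti (⟨le_rfl, zero_le_one⟩ : (0:ℝ) ∈ Icc (0:ℝ) 1)
      (⟨zero_le_one, le_rfl⟩ : (1:ℝ) ∈ Icc (0:ℝ) 1) zero_le_one
  have h0 : ψ 0 = 0 := by simp [hψ]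
  have h1 : ψ 1 = h 1 - h 0 - inner ℝ (g y) d - L / 2 * ‖d‖ ^ 2 := by simp [hψ]
  have hW1 : h 1 = W (y + d) := by simp [hh]
  have hW0 : h 0 = W y := by simp [hh]
  rw [h0, h1, hW1, hW0] at key
  linarith


/-- projected gradient step with step size `s = 2/(Lθ+2)` gives a point
`ŷ = y + θ (p(y) - y)` in `X` with `W(ŷ) - W(y) ≤ -θ ‖p(y) - y‖²`. The projection
`p` of `y - s • ∇W(y)` onto the nonempty closed convex set `X` is characterized by
the variational inequality from the Projection Theorem. -/
theorem stmt0 {n : ℕ} (X : Set (EuclideanSpace ℝ (Fin n)))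
    (hXne : X.Nonempty) (hXcl : IsClosed X) (hXconv : Convex ℝ X)
    (W : EuclideanSpace ℝ (Fin n) → ℝ)
    (g : EuclideanSpace ℝ (Fin n) → EuclideanSpace ℝ (Fin n))
    (hWconv : ConvexOn ℝ univ W)
    (hgrad : ∀ x, HasGradientAt W (g x) x)
    (L : ℝ) (hL : 0 < L)
    (hLip : ∀ y ∈ X, ∀ y' ∈ X, ‖g y - g y'‖ ≤ L * ‖y - y'‖)
    (y : EuclideanSpace ℝ (Fin n)) (hy : y ∈ X)
    (θ : ℝ) (hθ : θ ∈ Icc (0:ℝ) 1)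
    (s : ℝ) (hs : s = 2 / (L * θ + 2))
    (p : EuclideanSpace ℝ (Fin n)) (hpX : p ∈ X)
    (hproj : ∀ z ∈ X, (inner ℝ (z - p) ((y - s • g y) - p) : ℝ) ≤ 0) :
    y + θ • (p - y) ∈ X ∧ W (y + θ • (p - y)) - W y ≤ -θ * ‖p - y‖ ^ 2 := by
  obtain ⟨hθ0, hθ1⟩ := hθ
  have hmem : y + θ • (p - y) ∈ X := by
    have := hXconv hy hpX (by linarith) hθ0 (by ring : (1 - θ) + θ = 1)
    convert this using 1
    module
  refine ⟨hmem, ?_⟩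
  have hden : 0 < L * θ + 2 := by nlinarith
  have hspos : 0 < s := by rw [hs]; positivity
  -- projection inequality with z = y
  have hp := hproj y hy
  have hexp : ‖y - p‖ ^ 2 - s * (inner ℝ (y - p) (g y) : ℝ) ≤ 0 := by
    have : (inner ℝ (y - p) ((y - s • g y) - p) : ℝ)
        = (inner ℝ (y - p) (y - p) : ℝ) - s * inner ℝ (y - p) (g y) := by
      rw [show (y - s • g y) - p = (y - p) - s • g y by module]
      rw [inner_sub_right, real_inner_smul_right]
    rw [this, real_inner_self_eq_norm_sq] at hp
    linarith
  have hinner : (inner ℝ (g y) (p - y) : ℝ) ≤ -(‖p - y‖ ^ 2) / s := by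
    have h1 : (inner ℝ (y - p) (g y) : ℝ) = -(inner ℝ (g y) (p - y) : ℝ) := by
      rw [real_inner_comm, show y - p = -(p - y) by module, inner_neg_right]
    rw [h1] at hexp
    have h2 : ‖y - p‖ = ‖p - y‖ := by rw [show y - p = -(p - y) by module, norm_neg]
    rw [h2] at hexp
    rw [le_div_iff₀ hspos]
    nlinarith
  -- descent lemma
  have hdes := descent_aux X hXconv W g hgrad L hL hLip y (θ • (p - y)) hy hmem
  have hnorm : ‖θ • (p - y)‖ ^ 2 = θ ^ 2 * ‖p - y‖ ^ 2 := by
    rw [norm_smul, Real.norm_eq_abs, abs_of_nonneg hθ0, mul_pow]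
  have hinner2 : (inner ℝ (g y) (θ • (p - y)) : ℝ) = θ * inner ℝ (g y) (p - y) := by
    rw [real_inner_smul_right]
  rw [hnorm, hinner2] at hdes
  have hsval : -(‖p - y‖ ^ 2) / s = -((L * θ + 2) / 2) * ‖p - y‖ ^ 2 := by
    rw [hs]; field_simp
  rw [hsval] at hinner
  have : θ * (inner ℝ (g y) (p - y) : ℝ) ≤ θ * (-((L * θ + 2) / 2) * ‖p - y‖ ^ 2) :=
    mul_le_mul_of_nonneg_left hinner hθ0
  nlinarith [sq_nonneg (‖p - y‖), sq_nonneg θ]
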